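/- arXiv:1804.08017 — 2 statements merged into one kernel-verified Lean document; each statement's English description precedes it below -/
import Mathlib

section
/- Let n ≥ 1, let α_1,…,α_n ≥ 0 with ∑_j α_j = 1, let μ ≥ 1, and let β_j ∈ [1/μ, μ] for all j. Then ∑_{j=1}^n | α_j β_j / (∑_k α_k β_k) − α_j | ≤ 2(μ−1)/(μ+1). -/
theorem stmt_4 (n : ℕ) (hn : 1 ≤ n) (α β : Fin n → ℝ)
    (hα : ∀ j, 0 ≤ α j) (hsum : ∑ j, α j = 1)
    (μ : ℝ) (hμ : 1 ≤ μ) (hβ : ∀ j, β j ∈ Set.Icc (1 / μ) μ) :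
    ∑ j, |α j * β j / (∑ k, α k * β k) - α j| ≤ 2 * (μ - 1) / (μ + 1) := by
  rcases eq_or_lt_of_le hμ with h1 | hμ1
  · -- μ = 1, all β j = 1
    have hb : ∀ j, β j = 1 := fun j =>
      le_antisymm (h1 ▸ (hβ j).2) (by simpa [← h1] using (hβ j).1)
    simp [hb, hsum, ← h1]
  have hμ0 : 0 < μ := by linarith
  set S := ∑ k, α k * β k with hSdef
  have hSl : 1 / μ ≤ S := by
    rw [hSdef]
    calc 1 / μ = ∑ j, α j * (1 / μ) := by rw [← Finset.sum_mul, hsum, one_mul]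
    _ ≤ _ := Finset.sum_le_sum fun j _ => mul_le_mul_of_nonneg_left (hβ j).1 (hα j)
  have hSu : S ≤ μ := by
    rw [hSdef]
    calc ∑ k, α k * β k ≤ ∑ j, α j * μ :=
          Finset.sum_le_sum fun j _ => mul_le_mul_of_nonneg_left (hβ j).2 (hα j)
    _ = μ := by rw [← Finset.sum_mul, hsum, one_mul]
  have hS0 : 0 < S := lt_of_lt_of_le (by positivity) hSl
  have hμS : 1 ≤ μ * S := by
    have h := (div_le_iff₀ hμ0).mp hSl
    have h2 : S * μ = μ * S := mul_comm S μ
    linarith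
  have hrw : ∑ j, |α j * β j / S - α j| = (∑ j, α j * |β j - S|) / S := by
    rw [Finset.sum_div]
    refine Finset.sum_congr rfl fun j _ => ?_
    have h : α j * β j / S - α j = α j * (β j - S) / S := by
      field_simp
    rw [h, abs_div, abs_mul, abs_of_nonneg (hα j), abs_of_pos hS0]
  have htot : ∑ j, α j * (β j - S) = 0 := by
    simp only [mul_sub]
    rw [Finset.sum_sub_distrib, ← Finset.sum_mul, hsum, one_mul, ← hSdef, sub_self]
  set T := Finset.univ.filter (fun j => S ≤ β j) with hT
  set Tc := Finset.univ.filter (fun j => ¬ S ≤ β j) with hTc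
  set D := ∑ j ∈ T, α j * (β j - S) with hD
  set P := ∑ j ∈ T, α j with hP
  have hsplit : ∑ j ∈ Tc, α j * (β j - S) = -D := by
    have := Finset.sum_filter_add_sum_filter_not Finset.univ (fun j => S ≤ β j)
      (fun j => α j * (β j - S))
    rw [← hT, ← hTc, htot] at this
    linarith [this]
  have habs : ∑ j, α j * |β j - S| = 2 * D := by
    rw [← Finset.sum_filter_add_sum_filter_not Finset.univ (fun j => S ≤ β j)
      (fun j => α j * |β j - S|), ← hT, ← hTc]
    have e1 : ∑ j ∈ T, α j * |β j - S| = D := by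
      refine Finset.sum_congr rfl fun j hj => ?_
      have := (Finset.mem_filter.mp hj).2
      rw [abs_of_nonneg (by linarith : (0:ℝ) ≤ β j - S)]
    have e2 : ∑ j ∈ Tc, α j * |β j - S| = D := by
      have : ∑ j ∈ Tc, α j * |β j - S| = ∑ j ∈ Tc, -(α j * (β j - S)) := by
        refine Finset.sum_congr rfl fun j hj => ?_
        have hjj := (Finset.mem_filter.mp hj).2
        rw [abs_of_nonpos (by push_neg at hjj; linarith : β j - S ≤ 0)]
        ring
      rw [this, Finset.sum_neg_distrib, hsplit, neg_neg]
    rw [e1, e2]; ring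
  have hP0 : 0 ≤ P := Finset.sum_nonneg fun j _ => hα j
  have hPc : ∑ j ∈ Tc, α j = 1 - P := by
    have := Finset.sum_filter_add_sum_filter_not Finset.univ (fun j => S ≤ β j) α
    rw [← hT, ← hTc, hsum] at this
    linarith [this]
  have hP1 : P ≤ 1 := by
    have : 0 ≤ (1:ℝ) - P := hPc ▸ Finset.sum_nonneg fun j _ => hα j
    linarith
  have hD1 : D ≤ P * (μ - S) := by
    rw [hD, hP, Finset.sum_mul]
    refine Finset.sum_le_sum fun j _ => mul_le_mul_of_nonneg_left ?_ (hα j)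
    linarith [(hβ j).2]
  have hD2 : μ * D ≤ (1 - P) * (μ * S - 1) := by
    have step : D ≤ (1 - P) * (S - 1/μ) := by
      have : D = ∑ j ∈ Tc, α j * (S - β j) := by
        have : ∑ j ∈ Tc, α j * (S - β j) = -∑ j ∈ Tc, α j * (β j - S) := by
          rw [← Finset.sum_neg_distrib]
          exact Finset.sum_congr rfl fun j _ => by ring
        rw [this, hsplit, neg_neg]
      rw [this, ← hPc, Finset.sum_mul]
      refine Finset.sum_le_sum fun j _ => mul_le_mul_of_nonneg_left ?_ (hα j)
      linarith [(hβ j).1]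
    have e : μ * ((1 - P) * (S - 1 / μ)) = (1 - P) * (μ * S - 1) := by
      field_simp
    calc μ * D ≤ μ * ((1 - P) * (S - 1 / μ)) :=
          mul_le_mul_of_nonneg_left step (le_of_lt hμ0)
    _ = (1 - P) * (μ * S - 1) := e
  rw [hrw, habs, div_le_div_iff₀ hS0 (by linarith : (0:ℝ) < μ + 1)]
  nlinarith [mul_le_mul_of_nonneg_left hD1 (by linarith : (0:ℝ) ≤ μ * S - 1),
    mul_le_mul_of_nonneg_left hD2 (by linarith : (0:ℝ) ≤ μ - S),
    sq_nonneg (S - 1), mul_pos hμ0 hS0, sq_nonneg (μ - 1)]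
end

section
/- Let n ≥ 1, let α_1,…,α_n ≥ 0 with ∑_j α_j = 1, let μ ≥ 1, and let β_j ∈ [1/μ, μ]. Then there is a vector β' with each β'_j ∈ {μ, 1/μ} such that ∑_j |α_j β_j/(∑_k α_k β_k) − α_j| ≤ ∑_j |α_j β'_j/(∑_k α_k β'_k) − α_j|. -/
/-- Helper: if the vector `γ` is ≥ its α-weighted average `G` on `T` and ≤ `G` off `T`,
then the L1 perturbation equals twice the positive-part sum over `T`. -/
lemma aux_abs_sum {n : ℕ} (α γ : Fin n → ℝ) (hα : ∀ j, 0 ≤ α j)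
    (hα1 : ∑ j, α j = 1) (T : Finset (Fin n)) (G : ℝ) (hG : 0 < G)
    (hGsum : ∑ k, α k * γ k = G)
    (hT1 : ∀ j ∈ T, G ≤ γ j) (hT2 : ∀ j ∉ T, γ j ≤ G) :
    ∑ j, |α j * γ j / G - α j|
      = 2 * ((∑ j ∈ T, α j * γ j) / G - ∑ j ∈ T, α j) := by
  have habs1 : ∀ j ∈ T, |α j * γ j / G - α j| = α j * γ j / G - α j := by
    intro j hj
    apply abs_of_nonneg
    rw [sub_nonneg, le_div_iff₀ hG]
    exact mul_le_mul_of_nonneg_left (hT1 j hj) (hα j)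
  have habs2 : ∀ j ∈ Tᶜ, |α j * γ j / G - α j| = -(α j * γ j / G - α j) := by
    intro j hj
    apply abs_of_nonpos
    rw [sub_nonpos, div_le_iff₀ hG]
    exact mul_le_mul_of_nonneg_left (hT2 j (Finset.mem_compl.mp hj)) (hα j)
  have hsplit : ∑ j ∈ T, (α j * γ j / G - α j) + ∑ j ∈ Tᶜ, (α j * γ j / G - α j)
      = ∑ j, (α j * γ j / G - α j) := Finset.sum_add_sum_compl T _
  have htot : ∑ j, (α j * γ j / G - α j) = 0 := by
    rw [Finset.sum_sub_distrib, ← Finset.sum_div, hGsum, div_self (ne_of_gt hG), hα1]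
    ring
  have hTsum : ∑ j ∈ T, (α j * γ j / G - α j)
      = (∑ j ∈ T, α j * γ j) / G - ∑ j ∈ T, α j := by
    rw [Finset.sum_sub_distrib, Finset.sum_div]
  calc ∑ j, |α j * γ j / G - α j|
      = ∑ j ∈ T, |α j * γ j / G - α j| + ∑ j ∈ Tᶜ, |α j * γ j / G - α j| :=
        (Finset.sum_add_sum_compl T _).symm
    _ = ∑ j ∈ T, (α j * γ j / G - α j) + ∑ j ∈ Tᶜ, -(α j * γ j / G - α j) := by
        rw [Finset.sum_congr rfl habs1, Finset.sum_congr rfl habs2]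
    _ = ∑ j ∈ T, (α j * γ j / G - α j) - ∑ j ∈ Tᶜ, (α j * γ j / G - α j) := by
        rw [Finset.sum_neg_distrib]; ring
    _ = 2 * ((∑ j ∈ T, α j * γ j) / G - ∑ j ∈ T, α j) := by
        have h2 : ∑ j ∈ Tᶜ, (α j * γ j / G - α j)
            = - ∑ j ∈ T, (α j * γ j / G - α j) := by linarith [hsplit, htot]
        rw [h2, hTsum]; ring

theorem stmt_5 (n : ℕ) (hn : 1 ≤ n) (α β : Fin n → ℝ)
    (hα : ∀ j, 0 ≤ α j) (hsum : ∑ j, α j = 1)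
    (μ : ℝ) (hμ : 1 ≤ μ) (hβ : ∀ j, β j ∈ Set.Icc (1 / μ) μ) :
    ∃ β' : Fin n → ℝ, (∀ j, β' j = μ ∨ β' j = 1 / μ) ∧
      ∑ j, |α j * β j / (∑ k, α k * β k) - α j|
        ≤ ∑ j, |α j * β' j / (∑ k, α k * β' k) - α j| := by
  classical
  have hμ0 : (0:ℝ) < μ := lt_of_lt_of_le one_pos hμ
  have hinvle : 1/μ ≤ μ := by
    rw [div_le_iff₀ hμ0]; nlinarith
  set S : ℝ := ∑ k, α k * β k with hSdef
  have hSge : 1/μ ≤ S := by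
    have h1 : (1:ℝ)/μ = ∑ k, α k * (1/μ) := by rw [← Finset.sum_mul, hsum, one_mul]
    rw [h1]
    exact Finset.sum_le_sum fun k _ => mul_le_mul_of_nonneg_left (hβ k).1 (hα k)
  have hS0 : 0 < S := lt_of_lt_of_le (by positivity) hSge
  set β' : Fin n → ℝ := fun j => if S ≤ β j then μ else 1/μ with hβ'def
  have hβ'cases : ∀ j, β' j = μ ∨ β' j = 1/μ := by
    intro j; by_cases h : S ≤ β j
    · left; simp [hβ'def, h]
    · right; simp [hβ'def, h]
  have hβ'mem : ∀ j, 1/μ ≤ β' j ∧ β' j ≤ μ := by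
    intro j
    rcases hβ'cases j with h | h <;> rw [h]
    · exact ⟨hinvle, le_rfl⟩
    · exact ⟨le_rfl, hinvle⟩
  set S' : ℝ := ∑ k, α k * β' k with hS'def
  have hS'ge : 1/μ ≤ S' := by
    have h1 : (1:ℝ)/μ = ∑ k, α k * (1/μ) := by rw [← Finset.sum_mul, hsum, one_mul]
    rw [h1]
    exact Finset.sum_le_sum fun k _ => mul_le_mul_of_nonneg_left (hβ'mem k).1 (hα k)
  have hS'0 : 0 < S' := lt_of_lt_of_le (by positivity) hS'ge
  have hS'le : S' ≤ μ := by
    calc S' ≤ ∑ k, α k * μ :=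
          Finset.sum_le_sum fun k _ => mul_le_mul_of_nonneg_left (hβ'mem k).2 (hα k)
      _ = μ := by rw [← Finset.sum_mul, hsum, one_mul]
  set T : Finset (Fin n) := Finset.univ.filter (fun j => S ≤ β j) with hT
  have hmemT : ∀ j, j ∈ T ↔ S ≤ β j := by
    intro j; simp [hT]
  refine ⟨β', hβ'cases, ?_⟩
  -- rewrite both sides via the helper lemma with the same T
  have hL := aux_abs_sum α β hα hsum T S hS0 rfl
    (fun j hj => (hmemT j).mp hj)
    (fun j hj => le_of_not_ge ((hmemT j).not.mp hj))
  have hR := aux_abs_sum α β' hα hsum T S' hS'0 rfl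
    (fun j hj => by
      have : β' j = μ := by simp [hβ'def, (hmemT j).mp hj]
      rw [this]; exact hS'le)
    (fun j hj => by
      have : β' j = 1/μ := by simp [hβ'def, (hmemT j).not.mp hj]
      rw [this]; exact hS'ge)
  rw [hL, hR]
  -- now reduce to the fraction inequality
  have ha0 : 0 ≤ ∑ j ∈ T, α j := Finset.sum_nonneg fun j _ => hα j
  have hb0 : 0 ≤ ∑ j ∈ Tᶜ, α j := Finset.sum_nonneg fun j _ => hα j
  set a : ℝ := ∑ j ∈ T, α j with hadef
  set b : ℝ := ∑ j ∈ Tᶜ, α j with hbdef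
  set X : ℝ := ∑ j ∈ T, α j * β j with hXdef
  set Y : ℝ := ∑ j ∈ Tᶜ, α j * β j with hYdef
  have hXT' : ∑ j ∈ T, α j * β' j = a * μ := by
    rw [hadef, Finset.sum_mul]
    refine Finset.sum_congr rfl fun j hj => ?_
    have : β' j = μ := by simp [hβ'def, (hmemT j).mp hj]
    rw [this]
  have hYT' : ∑ j ∈ Tᶜ, α j * β' j = b * (1/μ) := by
    rw [hbdef, Finset.sum_mul]
    refine Finset.sum_congr rfl fun j hj => ?_
    have : β' j = 1/μ := by simp [hβ'def, (hmemT j).not.mp (Finset.mem_compl.mp hj)]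
    rw [this]
  have hSXY : X + Y = S := Finset.sum_add_sum_compl T _
  have hS'XY : a * μ + b * (1/μ) = S' := by
    rw [← hXT', ← hYT']; exact Finset.sum_add_sum_compl T _
  have hX0 : 0 ≤ X := Finset.sum_nonneg fun j _ => mul_nonneg (hα j) (by
    have := (hβ j).1; have : 0 < β j := lt_of_lt_of_le (by positivity) (hβ j).1
    linarith)
  have hXle : X ≤ a * μ := by
    rw [hadef, Finset.sum_mul]
    exact Finset.sum_le_sum fun j _ => mul_le_mul_of_nonneg_left (hβ j).2 (hα j)
  have hYge : b * (1/μ) ≤ Y := by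
    rw [hbdef, Finset.sum_mul]
    exact Finset.sum_le_sum fun j _ => mul_le_mul_of_nonneg_left (hβ j).1 (hα j)
  have hfrac : X / S ≤ (a * μ) / S' := by
    rw [div_le_div_iff₀ hS0 hS'0, ← hSXY, ← hS'XY]
    have h1 : X * (b * (1/μ)) ≤ (a * μ) * (b * (1/μ)) :=
      mul_le_mul_of_nonneg_right hXle (by positivity)
    have h2 : (a * μ) * (b * (1/μ)) ≤ (a * μ) * Y :=
      mul_le_mul_of_nonneg_left hYge (by positivity)
    nlinarith
  rw [hXT']
  linarith
end
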